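/- In the randomly oriented square lattice, the percolation probability satisfies the symmetry θ(p) = θ(1−p) for all p ∈ [0,1]. -/
import Mathlib


open MeasureTheory

/-- Edges of `ℤ²`: the pair `(v, true)` denotes the horizontal edge joining `v` to
`v + (1, 0)`, and `(v, false)` denotes the vertical edge joining `v` to `v + (0, 1)`. -/
abbrev LatticeEdge : Type := (ℤ × ℤ) × Bool

/-- An orientation configuration `ω : LatticeEdge → Bool`: for a horizontal edge
`(v, true)`, the value `true` means it is oriented rightward (from `v` to `v+(1,0)`)
and `false` leftward; for a vertical edge `(v, false)`, `true` means upward (from `v`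
to `v+(0,1)`) and `false` downward. `orientedAdj ω a b` says the edge between `a` and
`b` is oriented from `a` to `b`. -/
def orientedAdj (ω : LatticeEdge → Bool) (a b : ℤ × ℤ) : Prop :=
  (ω (a, true) = true ∧ b = (a.1 + 1, a.2)) ∨
  (ω (b, true) = false ∧ a = (b.1 + 1, b.2)) ∨
  (ω (a, false) = true ∧ b = (a.1, a.2 + 1)) ∨
  (ω (b, false) = false ∧ a = (b.1, b.2 + 1))

/-- The origin is the endpoint of an infinite oriented path directed away from it:
there exist distinct vertices `0 = v 0, v 1, v 2, …` such that for each `i` the edge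
between `v i` and `v (i+1)` is oriented from `v i` to `v (i+1)`. -/
def origPercolates (ω : LatticeEdge → Bool) : Prop :=
  ∃ v : ℕ → ℤ × ℤ, v 0 = (0, 0) ∧ Function.Injective v ∧
    ∀ i : ℕ, orientedAdj ω (v i) (v (i + 1))

/-- `P` is the law of the randomly oriented square lattice with parameter `p`: a
probability measure on orientation configurations under which the orientations of
distinct edges are independent, each horizontal edge being oriented rightward with
probability `p` (leftward otherwise) and each vertical edge upward with probability
`p` (downward otherwise). -/
def IsRandomOrientation (p : ℝ) (P : Measure (LatticeEdge → Bool)) : Prop :=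
  IsProbabilityMeasure P ∧
    ∀ (s : Finset LatticeEdge) (f : LatticeEdge → Bool),
      P {ω | ∀ e ∈ s, ω e = f e} =
        ENNReal.ofReal (∏ e ∈ s, if f e then p else 1 - p)

/-- Point reflection on edges. -/
def negE (e : LatticeEdge) : LatticeEdge :=
  (if e.2 then (-e.1.1 - 1, -e.1.2) else (-e.1.1, -e.1.2 - 1), e.2)

lemma negE_negE (e : LatticeEdge) : negE (negE e) = e := by
  obtain ⟨⟨x, y⟩, b⟩ := e
  cases b <;> simp [negE]

/-- Flip all orientations and reflect through the origin. -/
def flipT (ω : LatticeEdge → Bool) : LatticeEdge → Bool := fun e => !ω (negE e)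

lemma flipT_flipT (ω : LatticeEdge → Bool) : flipT (flipT ω) = ω := by
  funext e; simp [flipT, negE_negE]

lemma measurable_flipT : Measurable flipT := by
  apply measurable_pi_lambda
  intro e
  exact (Measurable.of_discrete (f := Bool.not)).comp (measurable_pi_apply (negE e))

def flipE : (LatticeEdge → Bool) ≃ᵐ (LatticeEdge → Bool) where
  toFun := flipT
  invFun := flipT
  left_inv := flipT_flipT
  right_inv := flipT_flipT
  measurable_toFun := measurable_flipT
  measurable_invFun := measurable_flipT

lemma orientedAdj_flipT (ω : LatticeEdge → Bool) (a b : ℤ × ℤ) :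
    orientedAdj (flipT ω) a b ↔ orientedAdj ω (-a.1, -a.2) (-b.1, -b.2) := by
  obtain ⟨a1, a2⟩ := a
  obtain ⟨b1, b2⟩ := b
  simp only [orientedAdj, flipT, negE, Bool.not_eq_true', Bool.not_eq_false',
    Prod.mk.injEq, reduceIte]
  constructor
  · rintro (⟨h, h1, h2⟩ | ⟨h, h1, h2⟩ | ⟨h, h1, h2⟩ | ⟨h, h1, h2⟩)
    · subst h1; subst h2
      exact Or.inr (Or.inl ⟨by rw [show (-(a1 + 1) : ℤ) = -a1 - 1 by ring]; exact h,
        by ring, rfl⟩)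
    · subst h1; subst h2
      exact Or.inl ⟨by rw [show (-(b1 + 1) : ℤ) = -b1 - 1 by ring]; exact h, by ring, rfl⟩
    · subst h1; subst h2
      exact Or.inr (Or.inr (Or.inr ⟨by rw [show (-(a2 + 1) : ℤ) = -a2 - 1 by ring]; exact h,
        rfl, by ring⟩))
    · subst h1; subst h2
      exact Or.inr (Or.inr (Or.inl ⟨by rw [show (-(b2 + 1) : ℤ) = -b2 - 1 by ring]; exact h,
        rfl, by ring⟩))
  · rintro (⟨h, h1, h2⟩ | ⟨h, h1, h2⟩ | ⟨h, h1, h2⟩ | ⟨h, h1, h2⟩)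
    · obtain rfl : b1 = a1 - 1 := by omega
      obtain rfl : b2 = a2 := by omega
      exact Or.inr (Or.inl ⟨by rw [show (-(a1 - 1) - 1 : ℤ) = -a1 by ring]; exact h,
        by ring, rfl⟩)
    · obtain rfl : b1 = a1 + 1 := by omega
      obtain rfl : b2 = a2 := by omega
      exact Or.inl ⟨by rw [show (-(a1 + 1) : ℤ) = -a1 - 1 by ring] at h; exact h, rfl, rfl⟩
    · obtain rfl : b1 = a1 := by omega
      obtain rfl : b2 = a2 - 1 := by omega
      exact Or.inr (Or.inr (Or.inr ⟨by rw [show (-(a2 - 1) - 1 : ℤ) = -a2 by ring]; exact h,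
        rfl, by ring⟩))
    · obtain rfl : b1 = a1 := by omega
      obtain rfl : b2 = a2 + 1 := by omega
      exact Or.inr (Or.inr (Or.inl ⟨by rw [show (-(a2 + 1) : ℤ) = -a2 - 1 by ring] at h; exact h,
        rfl, rfl⟩))

lemma origPercolates_flipT (ω : LatticeEdge → Bool) :
    origPercolates (flipT ω) ↔ origPercolates ω := by
  have neg_inj : Function.Injective (fun v : ℤ × ℤ => ((-v.1, -v.2) : ℤ × ℤ)) := by
    intro x y h
    simp only [Prod.mk.injEq, neg_inj] at h
    exact Prod.ext h.1 h.2
  constructor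
  · rintro ⟨v, hv0, hvinj, hadj⟩
    refine ⟨fun i => (-(v i).1, -(v i).2), by simp [hv0], neg_inj.comp hvinj, fun i => ?_⟩
    exact (orientedAdj_flipT ω (v i) (v (i + 1))).mp (hadj i)
  · rintro ⟨v, hv0, hvinj, hadj⟩
    refine ⟨fun i => (-(v i).1, -(v i).2), by simp [hv0], neg_inj.comp hvinj, fun i => ?_⟩
    exact (orientedAdj_flipT ω _ _).mpr (by simpa using hadj i)

/-- The cylinder π-system. -/
def cylSets : Set (Set (LatticeEdge → Bool)) :=
  {S | ∃ (s : Finset LatticeEdge) (f : LatticeEdge → Bool), S = {ω | ∀ e ∈ s, ω e = f e}}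

lemma isPiSystem_cylSets : IsPiSystem cylSets := by
  rintro S ⟨s, f, rfl⟩ S' ⟨s', f', rfl⟩ hne
  obtain ⟨ω₀, hω₀⟩ := hne
  simp only [Set.mem_inter_iff, Set.mem_setOf_eq] at hω₀
  refine ⟨s ∪ s', fun e => if e ∈ s then f e else f' e, ?_⟩
  ext ω
  simp only [Set.mem_inter_iff, Set.mem_setOf_eq, Finset.mem_union]
  constructor
  · rintro ⟨h1, h2⟩ e he
    by_cases hs : e ∈ s
    · simp [hs, h1 e hs]
    · rcases he with he | he
      · exact absurd he hs
      · simp [hs, h2 e he]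
  · intro h
    constructor
    · intro e he
      have := h e (Or.inl he)
      simpa [he] using this
    · intro e he
      have h2 := h e (Or.inr he)
      by_cases hs : e ∈ s
      · rw [if_pos hs] at h2
        rw [h2, ← hω₀.1 e hs, hω₀.2 e he]
      · rw [if_neg hs] at h2
        exact h2

lemma generateFrom_cylSets :
    MeasurableSpace.generateFrom cylSets = (inferInstance : MeasurableSpace (LatticeEdge → Bool)) := by
  apply le_antisymm
  · rw [MeasurableSpace.generateFrom_le_iff]
    rintro S ⟨s, f, rfl⟩
    have : {ω : LatticeEdge → Bool | ∀ e ∈ s, ω e = f e} =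
        ⋂ e ∈ s, (fun ω : LatticeEdge → Bool => ω e) ⁻¹' {f e} := by
      ext ω; simp
    rw [this]
    exact MeasurableSet.biInter s.countable_toSet fun e _ =>
      (measurable_pi_apply e) (measurableSet_singleton (f e))
  · rw [show (inferInstance : MeasurableSpace (LatticeEdge → Bool)) = MeasurableSpace.pi from rfl,
      MeasurableSpace.pi]
    apply iSup_le
    intro e
    rw [MeasurableSpace.comap_le_iff_le_map]
    intro t _
    show MeasurableSet[MeasurableSpace.generateFrom cylSets] ((fun ω => ω e) ⁻¹' t)
    have : (fun ω : LatticeEdge → Bool => ω e) ⁻¹' t = ⋃ b ∈ t, {ω | ∀ e' ∈ ({e} : Finset LatticeEdge), ω e' = b} := by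
      ext ω; simp
    rw [this]
    exact MeasurableSet.biUnion t.to_countable fun b _ =>
      MeasurableSpace.measurableSet_generateFrom ⟨{e}, fun _ => b, rfl⟩

/-- In the randomly oriented square lattice, the percolation probability satisfies the
symmetry `θ(p) = θ(1 − p)` for all `p ∈ [0, 1]`. -/
theorem randomly_oriented_theta_symmetric (p : ℝ) (hp0 : 0 ≤ p) (hp1 : p ≤ 1)
    (P Q : Measure (LatticeEdge → Bool))
    (hP : IsRandomOrientation p P) (hQ : IsRandomOrientation (1 - p) Q) :
    P {ω | origPercolates ω} = Q {ω | origPercolates ω} := by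
  obtain ⟨hPprob, hPcyl⟩ := hP
  obtain ⟨hQprob, hQcyl⟩ := hQ
  have negE_inj : Function.Injective negE := fun x y h => by
    have := congrArg negE h; rwa [negE_negE, negE_negE] at this
  have hmap : P = Q.map flipE := by
    refine ext_of_generate_finite cylSets generateFrom_cylSets.symm isPiSystem_cylSets ?_ ?_
    · rintro S ⟨s, f, rfl⟩
      rw [flipE.map_apply]
      have hpre : flipE ⁻¹' {ω | ∀ e ∈ s, ω e = f e} =
          {ω | ∀ e ∈ s.image negE, ω e = !f (negE e)} := by
        ext ω
        simp only [Set.mem_preimage, Set.mem_setOf_eq, Finset.mem_image]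
        constructor
        · rintro h e' ⟨e, he, rfl⟩
          have := h e he
          simp only [flipE, MeasurableEquiv.coe_mk, Equiv.coe_fn_mk, flipT] at this
          rw [negE_negE, ← this, Bool.not_not]
        · intro h e he
          have := h (negE e) ⟨e, he, rfl⟩
          rw [negE_negE] at this
          show (!ω (negE e)) = f e
          rw [this, Bool.not_not]
      rw [hpre, hQcyl, hPcyl,
        Finset.prod_image (fun a _ b _ h => negE_inj h)]
      congr 1
      apply Finset.prod_congr rfl
      intro e _
      rw [negE_negE]
      cases f e <;> simp <;> ring
    · rw [measure_univ, flipE.map_apply, Set.preimage_univ, measure_univ]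
  rw [hmap, flipE.map_apply]
  congr 1
  ext ω
  simp only [Set.mem_preimage, Set.mem_setOf_eq]
  exact origPercolates_flipT ω
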